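/- Under the assumptions of the previous statement (p^{cn}, p0, p1 ∈ (0,1) with p0 < p1, 0 < d < 1 < u, γ > 0, θ ∈ [0,1], and the map F as defined there), the equation y = F(y) admits a unique solution y* ∈ ℝ. -/

import Mathlib

private theorem aux_fix (c w k m a A K : ℝ) (hk : 0 < k) (hm : 0 < m) (ha : 0 < a)
    (hcw0 : 0 ≤ c * w) (hcwK : c * w ≤ K) (hK1 : K < 1) :
    ∃! y : ℝ, y = c * (A + Real.log (1 + (a - m) / (k * Real.exp (w * y) + m))) := by
  have hK0 : 0 ≤ K := le_trans hcw0 hcwK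
  set G : ℝ → ℝ := fun y =>
    c * (A + Real.log (1 + (a - m) / (k * Real.exp (w * y) + m))) with hG
  set D : ℝ → ℝ := fun y =>
    c * w * ((m - a) * (k * Real.exp (w * y))) /
      ((k * Real.exp (w * y) + m) * (k * Real.exp (w * y) + a)) with hD
  have hasD : ∀ y : ℝ, HasDerivAt G (D y) y := by
    intro y
    have hE : 0 < k * Real.exp (w * y) := mul_pos hk (Real.exp_pos _)
    have hDm : 0 < k * Real.exp (w * y) + m := by linarith
    have hDa : 0 < k * Real.exp (w * y) + a := by linarith
    have h1 : HasDerivAt (fun y : ℝ => w * y) w y := by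
      simpa using (hasDerivAt_id y).const_mul w
    have h2 := h1.exp
    have h3 := (h2.const_mul k).add_const m
    have h4 := (hasDerivAt_const y (a - m)).div h3 hDm.ne'
    have h5 := h4.const_add 1
    have hv : 0 < 1 + (a - m) / (k * Real.exp (w * y) + m) := by
      have hveq : 1 + (a - m) / (k * Real.exp (w * y) + m) =
          (k * Real.exp (w * y) + a) / (k * Real.exp (w * y) + m) := by
        field_simp
        ring
      rw [hveq]
      exact div_pos hDa hDm
    have h6 := h5.log hv.ne'
    have h7 := h6.const_add A
    have h8 := h7.const_mul c
    refine h8.congr_deriv ?_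
    rw [hD]
    have hne : k * Real.exp (w * y) + m + (a - m) ≠ 0 := by
      have : k * Real.exp (w * y) + m + (a - m) = k * Real.exp (w * y) + a := by ring
      rw [this]; exact hDa.ne'
    simp only [Pi.div_apply]
    field_simp
    ring
  have hlip : LipschitzWith K.toNNReal G := by
    refine lipschitzWith_of_nnnorm_deriv_le (fun y => (hasD y).differentiableAt) ?_
    intro y
    rw [(hasD y).deriv, ← NNReal.coe_le_coe, coe_nnnorm, Real.norm_eq_abs,
      Real.coe_toNNReal _ hK0]
    have hE : 0 < k * Real.exp (w * y) := mul_pos hk (Real.exp_pos _)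
    have hDm : 0 < k * Real.exp (w * y) + m := by linarith
    have hDa : 0 < k * Real.exp (w * y) + a := by linarith
    rw [hD, abs_le]
    constructor
    · rw [le_div_iff₀ (mul_pos hDm hDa)]
      nlinarith [mul_nonneg (sub_nonneg.2 hcwK) (mul_pos hDm hDa).le,
        mul_nonneg hcw0 (by positivity :
          (0:ℝ) ≤ (k * Real.exp (w * y)) ^ 2 + 2 * m * (k * Real.exp (w * y)) + a * m)]
    · rw [div_le_iff₀ (mul_pos hDm hDa)]
      nlinarith [mul_nonneg (sub_nonneg.2 hcwK) (mul_pos hDm hDa).le,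
        mul_nonneg hcw0 (by positivity :
          (0:ℝ) ≤ (k * Real.exp (w * y)) ^ 2 + 2 * a * (k * Real.exp (w * y)) + a * m)]
  have hcontr : ContractingWith K.toNNReal G := by
    refine ⟨?_, hlip⟩
    rw [← NNReal.coe_lt_coe, Real.coe_toNNReal _ hK0, NNReal.coe_one]
    exact hK1
  refine ⟨ContractingWith.fixedPoint G hcontr, hcontr.fixedPoint_isFixedPt.symm, ?_⟩
  intro z hz
  exact hcontr.fixedPoint_unique hz.symm

theorem stmt5 (pcn p0 p1 u d γ θ : ℝ)
    (hcn0 : 0 < pcn) (hcn1 : pcn < 1)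
    (hp00 : 0 < p0) (hp01 : p0 < 1) (hp10 : 0 < p1) (hp11 : p1 < 1)
    (hpp : p0 < p1) (hu : 1 < u) (hd1 : d < 1) (hd0 : 0 < d)
    (hγ : 0 < γ) (hθ0 : 0 ≤ θ) (hθ1 : θ ≤ 1) :
    let q : ℝ := (1 - d) / (u - d)
    let Δ1 : ℝ := p1 * (u - 1) + (1 - p1) * (d - 1)
    let Δ0 : ℝ := p0 * (u - 1) + (1 - p0) * (d - 1)
    let F : ℝ → ℝ := fun y =>
      ((Δ1 - Δ0) / (γ * (u - d))) *
        (Real.log ((1 - q) * p1 / (q * (1 - p1))) +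
          Real.log (1 + (p0 / p1 - (1 - p0) / (1 - p1)) /
            ((pcn / (1 - pcn)) * Real.exp (γ * θ * y) + (1 - p0) / (1 - p1))))
    ∃! y : ℝ, y = F y := by
  intro q Δ1 Δ0 F
  have hud : (0:ℝ) < u - d := by linarith
  have hc : (Δ1 - Δ0) / (γ * (u - d)) = (p1 - p0) / γ := by
    show ((p1 * (u - 1) + (1 - p1) * (d - 1)) - (p0 * (u - 1) + (1 - p0) * (d - 1)))
        / (γ * (u - d)) = (p1 - p0) / γ
    rw [div_eq_div_iff (by positivity) hγ.ne']
    ring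
  have hF : F = fun y =>
      ((p1 - p0) / γ) *
        (Real.log ((1 - q) * p1 / (q * (1 - p1))) +
          Real.log (1 + (p0 / p1 - (1 - p0) / (1 - p1)) /
            ((pcn / (1 - pcn)) * Real.exp (γ * θ * y) + (1 - p0) / (1 - p1)))) := by
    funext y
    show ((Δ1 - Δ0) / (γ * (u - d))) * _ = _
    rw [hc]
  rw [hF]
  have hcw : (p1 - p0) / γ * (γ * θ) = (p1 - p0) * θ := by
    field_simp
  refine aux_fix ((p1 - p0) / γ) (γ * θ) (pcn / (1 - pcn)) ((1 - p0) / (1 - p1)) (p0 / p1)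
    (Real.log ((1 - q) * p1 / (q * (1 - p1)))) (p1 - p0) ?_ ?_ ?_ ?_ ?_ ?_
  · exact div_pos hcn0 (by linarith)
  · exact div_pos (by linarith) (by linarith)
  · exact div_pos hp00 hp10
  · rw [hcw]; nlinarith
  · rw [hcw]; nlinarith
  · linarith
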